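/- Let p = (p₁ ≥ p₂ ≥ ⋯ ≥ p_k ≥ 1) be a partition of n with k parts. Then N_p equals the number of (unordered) set partitions of {1,…,n+k} into k blocks of cardinalities p₁+1, p₂+1, …, p_k+1 such that the minimal elements of two distinct blocks are never two consecutive integers. -/

import Mathlib

set_option maxHeartbeats 1000000

open Finset

/-- `Θ(φ)`: the multiset of nonzero fiber cardinalities `|φ⁻¹(j)|`, `j ∈ {1,…,n}`,
of a map `φ : Fin n → Fin n`. -/
def fiberMultiset {n : ℕ} (φ : Fin n → Fin n) : Multiset ℕ :=
  ((Finset.univ.val : Multiset (Fin n)).map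
    (fun j => (Finset.univ.filter (fun t => φ t = j)).card)).filter (· ≠ 0)

namespace Np14

variable {n k : ℕ}

/-- fiber cardinality -/
def fib (φ : Fin n → Fin n) (v : Fin n) : ℕ := (univ.filter (fun t => φ t = v)).card

/-- set of values with nonempty fiber -/
def Sset (φ : Fin n → Fin n) : Finset (Fin n) := univ.filter (fun v => fib φ v ≠ 0)

def cle (φ : Fin n → Fin n) (t : Fin n) : ℕ := ((Sset φ).filter (· ≤ t)).card
def clt (φ : Fin n → Fin n) (t : Fin n) : ℕ := ((Sset φ).filter (· < t)).card

lemma clt_le_cle (φ : Fin n → Fin n) (t : Fin n) : clt φ t ≤ cle φ t :=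
  card_le_card (filter_subset_filter _ (by intro x hx; exact hx) |>.trans (by
    intro x hx; simp only [mem_filter] at *; exact ⟨hx.1, le_of_lt hx.2⟩))

lemma mem_Sset_iff {φ : Fin n → Fin n} {v : Fin n} : v ∈ Sset φ ↔ ∃ t, φ t = v := by
  simp only [Sset, mem_filter, mem_univ, true_and, fib, ne_eq, card_eq_zero,
    filter_eq_empty_iff, not_forall, not_not]
  constructor
  · rintro ⟨t, -, h⟩; exact ⟨t, h⟩
  · rintro ⟨t, h⟩; exact ⟨t, by simp, h⟩

lemma apply_mem_Sset (φ : Fin n → Fin n) (t : Fin n) : φ t ∈ Sset φ :=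
  mem_Sset_iff.2 ⟨t, rfl⟩

lemma fiberMultiset_eq (φ : Fin n → Fin n) :
    fiberMultiset φ = (Sset φ).val.map (fib φ) := by
  rw [fiberMultiset, Multiset.filter_map]
  congr 1

lemma card_Sset_of_fiberMultiset {φ : Fin n → Fin n} {M : Multiset ℕ}
    (h : fiberMultiset φ = M) : (Sset φ).card = Multiset.card M := by
  rw [← h, fiberMultiset_eq, Multiset.card_map]
  rfl

section WithCard

variable (φ : Fin n → Fin n)

lemma cle_le (hk : (Sset φ).card = k) : ∀ t, cle φ t ≤ k := fun _ => hk ▸ card_le_card (filter_subset _ _)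

/-- the order embedding of `Fin n` into `Fin (n+k)` determined by `φ` -/
def eFn (hk : (Sset φ).card = k) (t : Fin n) : Fin (n + k) :=
  ⟨t + cle φ t, by
    have h1 : (t : ℕ) < n := t.2
    have := cle_le φ hk t
    omega⟩

/-- the minima function -/
def mFn (hk : (Sset φ).card = k) (v : Fin n) : Fin (n + k) :=
  ⟨v + clt φ v, by
    have h1 : (v : ℕ) < n := v.2
    have := (clt_le_cle φ v).trans (cle_le φ hk v)
    omega⟩

variable {φ} (hk : (Sset φ).card = k)

lemma eFn_strictMono : StrictMono (eFn φ hk) := by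
  intro t t' h
  have hmono : cle φ t ≤ cle φ t' := by
    apply card_le_card
    intro x hx
    simp only [cle, mem_filter] at *
    exact ⟨hx.1, hx.2.trans h.le⟩
  simp only [eFn, Fin.mk_lt_mk, Fin.lt_iff_val_lt_val] at *
  omega

lemma clt_lt_cle {v t : Fin n} (hv : v ∈ Sset φ) (hvt : v ≤ t) :
    clt φ v < cle φ t := by
  have hsub : insert v ((Sset φ).filter (· < v)) ⊆ (Sset φ).filter (· ≤ t) := by
    intro x hx
    rcases mem_insert.1 hx with rfl | hx
    · exact mem_filter.2 ⟨hv, hvt⟩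
    · simp only [mem_filter] at *
      exact ⟨hx.1, (hx.2.le.trans hvt)⟩
  have := card_le_card hsub
  rwa [card_insert_of_notMem (by simp [mem_filter])] at this

lemma mFn_lt_eFn {v t : Fin n} (hv : v ∈ Sset φ) (hvt : v ≤ t) :
    mFn φ hk v < eFn φ hk t := by
  have := clt_lt_cle hv hvt
  simp only [mFn, eFn, Fin.mk_lt_mk]
  have : (v : ℕ) ≤ t := hvt
  omega

lemma eFn_eq_mFn_succ {v : Fin n} (hv : v ∈ Sset φ) :
    (eFn φ hk v : ℕ) = (mFn φ hk v : ℕ) + 1 := by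
  have : (Sset φ).filter (· ≤ v) = insert v ((Sset φ).filter (· < v)) := by
    ext x
    simp only [mem_filter, mem_insert]
    constructor
    · rintro ⟨h1, h2⟩
      rcases eq_or_lt_of_le h2 with h | h
      · exact Or.inl h
      · exact Or.inr ⟨h1, h⟩
    · rintro (rfl | ⟨h1, h2⟩)
      · exact ⟨hv, le_refl _⟩
      · exact ⟨h1, h2.le⟩
  simp only [eFn, mFn, cle, clt, this]
  rw [card_insert_of_notMem (by simp [mem_filter])]
  omega

lemma mFn_add_one_lt {v v' : Fin n} (hv : v ∈ Sset φ) (hv' : v' ∈ Sset φ)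
    (h : v < v') : (mFn φ hk v : ℕ) + 1 < (mFn φ hk v' : ℕ) := by
  have h1 : clt φ v < clt φ v' := by
    have hsub : insert v ((Sset φ).filter (· < v)) ⊆ (Sset φ).filter (· < v') := by
      intro x hx
      rcases mem_insert.1 hx with rfl | hx
      · exact mem_filter.2 ⟨hv, h⟩
      · simp only [mem_filter] at *
        exact ⟨hx.1, hx.2.trans h⟩
    have := card_le_card hsub
    rwa [card_insert_of_notMem (by simp [mem_filter])] at this
  have h2 : (v : ℕ) < v' := h
  simp only [mFn, Fin.mk_lt_mk]
  omega

lemma mFn_strictMonoOn {v v' : Fin n} (hv : v ∈ Sset φ) (hv' : v' ∈ Sset φ)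
    (h : v < v') : mFn φ hk v < mFn φ hk v' := by
  have := mFn_add_one_lt hk hv hv' h
  simp only [Fin.lt_iff_val_lt_val]; omega

lemma mFn_injOn : Set.InjOn (mFn φ hk) (Sset φ) := by
  intro v hv v' hv' hvv'
  by_contra hne
  rcases lt_or_gt_of_ne hne with h | h
  · exact absurd hvv' (mFn_strictMonoOn hk hv hv' h).ne
  · exact absurd hvv'.symm (mFn_strictMonoOn hk hv' hv h).ne

lemma eFn_ne_mFn (t : Fin n) {v : Fin n} (hv : v ∈ Sset φ) :
    eFn φ hk t ≠ mFn φ hk v := by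
  rcases le_or_gt v t with h | h
  · exact (mFn_lt_eFn hk hv h).ne'
  · have h1 : cle φ t ≤ clt φ v := by
      apply card_le_card
      intro x hx
      simp only [mem_filter] at *
      exact ⟨hx.1, lt_of_le_of_lt hx.2 h⟩
    have h2 : (t : ℕ) < v := h
    simp only [eFn, mFn, ne_eq, Fin.mk.injEq]
    omega

lemma eFn_injective : Function.Injective (eFn φ hk) := (eFn_strictMono hk).injective

/-- the block associated to a value `v` -/
def blockOf (v : Fin n) : Finset (Fin (n + k)) :=
  insert (mFn φ hk v) ((univ.filter (fun t => φ t = v)).image (eFn φ hk))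

/-- the set of minima -/
def Mset : Finset (Fin (n + k)) := (Sset φ).image (mFn φ hk)

lemma mem_blockOf {x : Fin (n + k)} {v : Fin n} :
    x ∈ blockOf hk v ↔ x = mFn φ hk v ∨ ∃ t, φ t = v ∧ eFn φ hk t = x := by
  simp only [blockOf, mem_insert, mem_image, mem_filter, mem_univ, true_and]

lemma mFn_le_of_mem_blockOf (hφ : ∀ j, φ j ≤ j) {x : Fin (n + k)} {v : Fin n}
    (hv : v ∈ Sset φ) (hx : x ∈ blockOf hk v) : mFn φ hk v ≤ x := by
  rcases (mem_blockOf hk).1 hx with rfl | ⟨t, ht, rfl⟩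
  · exact le_refl _
  · exact (mFn_lt_eFn hk hv (ht ▸ hφ t)).le

lemma card_blockOf {v : Fin n} (hv : v ∈ Sset φ) :
    (blockOf hk v).card = fib φ v + 1 := by
  have hnm : mFn φ hk v ∉ (univ.filter (fun t => φ t = v)).image (eFn φ hk) := by
    simp only [mem_image, mem_filter, mem_univ, true_and, not_exists, not_and]
    intro t _
    exact eFn_ne_mFn hk t hv
  rw [blockOf, card_insert_of_notMem hnm, card_image_of_injective _ (eFn_injective hk)]
  rfl

lemma blockOf_injOn : Set.InjOn (blockOf hk) (Sset φ) := by
  intro v hv u hu h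
  have h1 : mFn φ hk v ∈ blockOf hk u := h ▸ mem_insert_self _ _
  rcases (mem_blockOf hk).1 h1 with he | ⟨t, _, ht⟩
  · exact mFn_injOn hk hv hu he
  · exact absurd ht (eFn_ne_mFn hk t hv)


lemma blockOf_disjoint {v u : Fin n} (hv : v ∈ Sset φ) (hu : u ∈ Sset φ)
    (hvu : v ≠ u) : Disjoint (blockOf hk v) (blockOf hk u) := by
  rw [disjoint_left]
  intro x hxv hxu
  rcases (mem_blockOf hk).1 hxv with rfl | ⟨t, ht, rfl⟩
  · rcases (mem_blockOf hk).1 hxu with he | ⟨t, _, ht⟩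
    · exact hvu (mFn_injOn hk hv hu he)
    · exact absurd ht (eFn_ne_mFn hk t hv)
  · rcases (mem_blockOf hk).1 hxu with he | ⟨t', ht', he⟩
    · exact absurd he (eFn_ne_mFn hk t hu)
    · exact hvu (ht ▸ ht' ▸ congrArg φ (eFn_injective hk he.symm))

lemma card_Mset : (Mset hk).card = k := by
  rw [Mset, card_image_of_injOn (mFn_injOn hk), hk]

lemma eFn_not_mem_Mset (t : Fin n) : eFn φ hk t ∉ Mset hk := by
  simp only [Mset, mem_image, not_exists, not_and]
  intro v hv
  exact fun h => eFn_ne_mFn hk t hv h.symm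

lemma image_eFn_eq_compl : univ.image (eFn φ hk) = (Mset hk)ᶜ := by
  apply eq_of_subset_of_card_le
  · intro x hx
    rcases mem_image.1 hx with ⟨t, _, rfl⟩
    exact mem_compl.2 (eFn_not_mem_Mset hk t)
  · rw [card_compl, card_Mset hk, Fintype.card_fin,
      card_image_of_injective _ (eFn_injective hk), card_univ, Fintype.card_fin]
    omega

lemma mem_blockOf_self {v : Fin n} : mFn φ hk v ∈ blockOf hk v := mem_insert_self _ _

lemma eFn_mem_blockOf (t : Fin n) : eFn φ hk t ∈ blockOf hk (φ t) :=
  (mem_blockOf hk).2 (Or.inr ⟨t, rfl, rfl⟩)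

/-- the partition associated to `φ` -/
def toPartition (hφ : ∀ j, φ j ≤ j) : Finpartition (univ : Finset (Fin (n + k))) where
  parts := (Sset φ).image (blockOf hk)
  supIndep := by
    rw [supIndep_iff_pairwiseDisjoint]
    intro B hB B' hB' hBB'
    rcases mem_image.1 (mem_coe.1 hB) with ⟨v, hv, rfl⟩
    rcases mem_image.1 (mem_coe.1 hB') with ⟨u, hu, rfl⟩
    have hvu : v ≠ u := fun h => hBB' (by rw [h])
    exact blockOf_disjoint hk hv hu hvu
  sup_parts := by
    apply le_antisymm le_top
    intro x _
    rw [mem_sup]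
    by_cases hx : x ∈ Mset hk
    · rcases mem_image.1 hx with ⟨v, hv, rfl⟩
      exact ⟨blockOf hk v, mem_image_of_mem _ hv, mem_blockOf_self hk⟩
    · have : x ∈ univ.image (eFn φ hk) := by
        rw [image_eFn_eq_compl hk]; exact mem_compl.2 hx
      rcases mem_image.1 this with ⟨t, _, rfl⟩
      exact ⟨blockOf hk (φ t), mem_image_of_mem _ (apply_mem_Sset φ t),
        eFn_mem_blockOf hk t⟩
  bot_notMem := by
    intro h
    rcases mem_image.1 h with ⟨v, _, hb⟩
    have := mem_blockOf_self (v := v) hk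
    rw [hb] at this
    exact notMem_empty _ this

lemma parts_toPartition (hφ : ∀ j, φ j ≤ j) :
    (toPartition hk hφ).parts = (Sset φ).image (blockOf hk) := by
  rfl

lemma sizes_toPartition (hφ : ∀ j, φ j ≤ j) :
    (toPartition hk hφ).parts.val.map Finset.card = (fiberMultiset φ).map (· + 1) := by
  rw [parts_toPartition, image_val_of_injOn (blockOf_injOn hk), Multiset.map_map,
    fiberMultiset_eq, Multiset.map_map]
  apply Multiset.map_congr rfl
  intro v hv
  exact card_blockOf hk (by exact hv)

lemma eq_mFn_of_min {B : Finset (Fin (n + k))} (hφ : ∀ j, φ j ≤ j)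
    (hB : B ∈ (toPartition hk hφ).parts) {b : Fin (n + k)} (hb : b ∈ B)
    (hmin : ∀ x ∈ B, b ≤ x) :
    ∃ v ∈ Sset φ, B = blockOf hk v ∧ b = mFn φ hk v := by
  rcases mem_image.1 hB with ⟨v, hv, rfl⟩
  refine ⟨v, hv, rfl, ?_⟩
  exact le_antisymm (hmin _ (mem_blockOf_self hk)) (mFn_le_of_mem_blockOf hk hφ hv hb)

lemma minima_nonconsec_toPartition (hφ : ∀ j, φ j ≤ j) :
    ∀ B ∈ (toPartition hk hφ).parts, ∀ B' ∈ (toPartition hk hφ).parts, B ≠ B' →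
      ∀ b ∈ B, ∀ b' ∈ B',
        (∀ x ∈ B, b ≤ x) → (∀ x ∈ B', b' ≤ x) → (b : ℕ) + 1 ≠ (b' : ℕ) := by
  intro B hB B' hB' hne b hb b' hb' hmin hmin'
  rcases eq_mFn_of_min hk hφ hB hb hmin with ⟨v, hv, rfl, rfl⟩
  rcases eq_mFn_of_min hk hφ hB' hb' hmin' with ⟨u, hu, rfl, rfl⟩
  have hvu : v ≠ u := fun h => hne (by rw [h])
  rcases lt_or_gt_of_ne hvu with h | h
  · exact (mFn_add_one_lt hk hv hu h).ne
  · have := mFn_add_one_lt hk hu hv h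
    omega

lemma compl_filter_lt_eFn (t : Fin n) :
    (((Mset hk)ᶜ).filter (· < eFn φ hk t)).card = (t : ℕ) := by
  have himg : ((Mset hk)ᶜ).filter (· < eFn φ hk t) = (Iio t).image (eFn φ hk) := by
    ext x
    simp only [mem_filter, mem_compl, mem_image, mem_Iio]
    constructor
    · rintro ⟨hx, hlt⟩
      have hxi : x ∈ univ.image (eFn φ hk) := by
        rw [image_eFn_eq_compl hk]; exact mem_compl.2 hx
      rcases mem_image.1 hxi with ⟨t', _, rfl⟩
      exact ⟨t', (eFn_strictMono hk).lt_iff_lt.1 hlt, rfl⟩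
    · rintro ⟨t', h, rfl⟩
      exact ⟨eFn_not_mem_Mset hk t', eFn_strictMono hk h⟩
  rw [himg, card_image_of_injective _ (eFn_injective hk), Fin.card_Iio]

lemma compl_filter_lt_mFn {v : Fin n} (hv : v ∈ Sset φ) :
    (((Mset hk)ᶜ).filter (· < mFn φ hk v)).card = (v : ℕ) := by
  have hset : ((Mset hk)ᶜ).filter (· < mFn φ hk v)
      = ((Mset hk)ᶜ).filter (· < eFn φ hk v) := by
    ext x
    simp only [mem_filter, mem_compl, and_congr_right_iff]
    intro hx
    have hne : (x : ℕ) ≠ (mFn φ hk v : ℕ) := by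
      intro hh
      exact hx (Fin.ext hh ▸ mem_image_of_mem (mFn φ hk) hv)
    have he := eFn_eq_mFn_succ hk hv
    rw [Fin.lt_iff_val_lt_val, Fin.lt_iff_val_lt_val]
    omega
  rw [hset, compl_filter_lt_eFn hk v]

lemma Sset_image_val :
    (Sset φ).image Fin.val
      = (Mset hk).image (fun x => (((Mset hk)ᶜ).filter (· < x)).card) := by
  ext i
  simp only [mem_image]
  constructor
  · rintro ⟨v, hv, rfl⟩
    exact ⟨mFn φ hk v, mem_image_of_mem _ hv, compl_filter_lt_mFn hk hv⟩
  · rintro ⟨x, hx, rfl⟩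
    rcases mem_image.1 hx with ⟨v, hv, rfl⟩
    exact ⟨v, hv, (compl_filter_lt_mFn hk hv).symm⟩

end WithCard

/-- the set of block minima of a finpartition -/
def minimaSet {N : ℕ} (P : Finpartition (univ : Finset (Fin N))) : Finset (Fin N) :=
  P.parts.biUnion (fun B => B.filter (fun b => ∀ x ∈ B, b ≤ x))

section WithCard2

variable {φ : Fin n → Fin n} (hk : (Sset φ).card = k)

lemma minimaSet_toPartition (hφ : ∀ j, φ j ≤ j) :
    minimaSet (toPartition hk hφ) = Mset hk := by
  ext x
  simp only [minimaSet, mem_biUnion, mem_filter]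
  constructor
  · rintro ⟨B, hB, hxB, hmin⟩
    rcases eq_mFn_of_min hk hφ hB hxB hmin with ⟨v, hv, -, rfl⟩
    exact mem_image_of_mem _ hv
  · intro hx
    rcases mem_image.1 hx with ⟨v, hv, rfl⟩
    refine ⟨blockOf hk v, mem_image_of_mem _ hv, mem_blockOf_self hk, ?_⟩
    intro x hx
    exact mFn_le_of_mem_blockOf hk hφ hv hx

theorem toPartition_injective {φ' : Fin n → Fin n} (hφ : ∀ j, φ j ≤ j)
    (hk' : (Sset φ').card = k) (hφ' : ∀ j, φ' j ≤ j)
    (h : toPartition hk hφ = toPartition hk' hφ') : φ = φ' := by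
  have hM : Mset hk = Mset hk' := by
    rw [← minimaSet_toPartition hk hφ, ← minimaSet_toPartition hk' hφ', h]
  have hS : Sset φ = Sset φ' := by
    have himg : (Sset φ).image Fin.val = (Sset φ').image Fin.val := by
      rw [Sset_image_val hk, Sset_image_val hk', hM]
    ext v
    constructor <;> intro hv
    · have : (v : ℕ) ∈ (Sset φ').image Fin.val := himg ▸ mem_image_of_mem _ hv
      rcases mem_image.1 this with ⟨u, hu, he⟩
      exact (Fin.ext he : u = v) ▸ hu
    · have : (v : ℕ) ∈ (Sset φ).image Fin.val := himg ▸ mem_image_of_mem _ hv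
      rcases mem_image.1 this with ⟨u, hu, he⟩
      exact (Fin.ext he : u = v) ▸ hu
  have hcle : ∀ t, cle φ t = cle φ' t := by
    intro t; unfold cle; rw [hS]
  have hclt : ∀ t, clt φ t = clt φ' t := by
    intro t; unfold clt; rw [hS]
  have heFn : ∀ t, eFn φ hk t = eFn φ' hk' t := by
    intro t; apply Fin.ext; simp only [eFn, hcle]
  have hmFn : ∀ t, mFn φ hk t = mFn φ' hk' t := by
    intro t; apply Fin.ext; simp only [mFn, hclt]
  funext t
  have hx1 : eFn φ hk t ∈ blockOf hk (φ t) := eFn_mem_blockOf hk t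
  have hx2 : eFn φ hk t ∈ blockOf hk' (φ' t) := by
    rw [heFn t]; exact eFn_mem_blockOf hk' t
  have hB1 : blockOf hk (φ t) ∈ (toPartition hk hφ).parts :=
    mem_image_of_mem _ (apply_mem_Sset φ t)
  have hB2 : blockOf hk' (φ' t) ∈ (toPartition hk hφ).parts := by
    rw [h]; exact mem_image_of_mem _ (apply_mem_Sset φ' t)
  have hBeq : blockOf hk (φ t) = blockOf hk' (φ' t) :=
    (toPartition hk hφ).eq_of_mem_parts hB1 hB2 hx1 hx2
  have hm : mFn φ hk (φ t) ∈ blockOf hk' (φ' t) := hBeq ▸ mem_blockOf_self hk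
  have hSm : φ t ∈ Sset φ' := hS ▸ apply_mem_Sset φ t
  rcases (mem_blockOf hk').1 hm with he | ⟨t'', _, ht''⟩
  · rw [hmFn (φ t)] at he
    exact mFn_injOn hk' hSm (apply_mem_Sset φ' t) he
  · rw [hmFn (φ t)] at ht''
    exact absurd ht'' (eFn_ne_mFn hk' t'' hSm)

end WithCard2

lemma finpartition_ext {α : Type*} [Lattice α] [OrderBot α] {a : α}
    {P Q : Finpartition a} (h : P.parts = Q.parts) : P = Q := by
  cases P; cases Q; cases h; rfl

section Surj

variable {N : ℕ} {P : Finpartition (univ : Finset (Fin N))}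

lemma mem_minimaSet {x : Fin N} :
    x ∈ minimaSet P ↔ ∃ B ∈ P.parts, x ∈ B ∧ ∀ y ∈ B, x ≤ y := by
  simp only [minimaSet, mem_biUnion, mem_filter]

lemma min'_mem_minimaSet {B : Finset (Fin N)} (hB : B ∈ P.parts) :
    B.min' (P.nonempty_of_mem_parts hB) ∈ minimaSet P :=
  mem_minimaSet.2 ⟨B, hB, B.min'_mem _, fun y hy => B.min'_le y hy⟩

lemma eq_min'_of_minimaSet {x : Fin N} (hx : x ∈ minimaSet P) {B : Finset (Fin N)}
    (hB : B ∈ P.parts) (hxB : x ∈ B) :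
    x = B.min' (P.nonempty_of_mem_parts hB) := by
  rcases mem_minimaSet.1 hx with ⟨B', hB', hxB', hmin⟩
  have hBB : B' = B := P.eq_of_mem_parts hB' hB hxB' hxB
  subst hBB
  exact le_antisymm (hmin _ (B'.min'_mem _)) (B'.min'_le x hxB)

lemma not_mem_minimaSet {x : Fin N} {B : Finset (Fin N)} (hB : B ∈ P.parts)
    (hxB : x ∈ B) (hx : x ≠ B.min' (P.nonempty_of_mem_parts hB)) :
    x ∉ minimaSet P :=
  fun h => hx (eq_min'_of_minimaSet h hB hxB)

lemma minimaSet_filter_eq {B : Finset (Fin N)} (hB : B ∈ P.parts) :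
    B.filter (fun b => ∀ x ∈ B, b ≤ x) = {B.min' (P.nonempty_of_mem_parts hB)} := by
  ext b
  simp only [mem_filter, mem_singleton]
  constructor
  · rintro ⟨hbB, hmin⟩
    exact le_antisymm (hmin _ (B.min'_mem _)) (B.min'_le b hbB)
  · rintro rfl
    exact ⟨B.min'_mem _, fun x hx => B.min'_le x hx⟩

lemma card_minimaSet : (minimaSet P).card = P.parts.card := by
  have hd : ∀ B ∈ P.parts, ∀ B' ∈ P.parts, B ≠ B' →
      Disjoint (B.filter (fun b => ∀ x ∈ B, b ≤ x)) (B'.filter (fun b => ∀ x ∈ B', b ≤ x)) :=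
    fun B hB B' hB' hne =>
      Finset.disjoint_of_subset_left (filter_subset _ _)
        (Finset.disjoint_of_subset_right (filter_subset _ _)
          (P.disjoint hB hB' hne))
  have hc := Finset.card_biUnion hd
  rw [minimaSet, hc,
    Finset.sum_congr rfl (fun B hB => by rw [minimaSet_filter_eq hB, card_singleton])]
  simp

end Surj

section Surj2

variable (P : Finpartition (univ : Finset (Fin (n + k))))
variable (hkP : P.parts.card = k)
variable (h2 : ∀ B ∈ P.parts, 2 ≤ B.card)
variable (hcons : ∀ B ∈ P.parts, ∀ B' ∈ P.parts, B ≠ B' →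
      ∀ b ∈ B, ∀ b' ∈ B',
        (∀ x ∈ B, b ≤ x) → (∀ x ∈ B', b' ≤ x) → (b : ℕ) + 1 ≠ (b' : ℕ))

/-- count of non-minima below `x` -/
def gP (x : Fin (n + k)) : ℕ := (((minimaSet P)ᶜ).filter (· < x)).card

include hkP in
lemma card_compl_minimaSet : ((minimaSet P)ᶜ).card = n := by
  rw [card_compl, card_minimaSet, hkP, Fintype.card_fin]
  omega

lemma gP_mono {x y : Fin (n + k)} (h : x ≤ y) : gP P x ≤ gP P y := by
  apply card_le_card
  intro z hz
  simp only [mem_filter] at *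
  exact ⟨hz.1, lt_of_lt_of_le hz.2 h⟩

lemma gP_lt_of_compl {x y : Fin (n + k)} (hx : x ∉ minimaSet P) (h : x < y) :
    gP P x < gP P y := by
  have hsub : insert x (((minimaSet P)ᶜ).filter (· < x))
      ⊆ ((minimaSet P)ᶜ).filter (· < y) := by
    intro z hz
    rcases mem_insert.1 hz with rfl | hz
    · exact mem_filter.2 ⟨mem_compl.2 hx, h⟩
    · simp only [mem_filter] at *
      exact ⟨hz.1, hz.2.trans h⟩
  have := card_le_card hsub
  rwa [card_insert_of_notMem (by simp [mem_filter])] at this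

include hkP in
lemma gP_lt_n {x : Fin (n + k)} (hx : x ∉ minimaSet P) : gP P x < n := by
  have hsub : ((minimaSet P)ᶜ).filter (· < x) ⊆ ((minimaSet P)ᶜ).erase x := by
    intro z hz
    simp only [mem_filter, mem_erase] at *
    exact ⟨fun h => absurd rfl (h ▸ hz.2.ne), hz.1⟩
  have h1 := card_le_card hsub
  rw [card_erase_of_mem (mem_compl.2 hx), card_compl_minimaSet P hkP] at h1
  have h0 : 0 < n := by
    have := card_compl_minimaSet P hkP
    have hx' : x ∈ (minimaSet P)ᶜ := mem_compl.2 hx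
    have := card_pos.2 ⟨x, hx'⟩
    omega
  exact lt_of_le_of_lt h1 (by omega)

lemma gP_add (x : Fin (n + k)) :
    gP P x + ((minimaSet P).filter (· < x)).card = (x : ℕ) := by
  have h1 : ((minimaSet P)ᶜ).filter (· < x) = (Iio x).filter (· ∉ minimaSet P) := by
    ext z; simp only [mem_filter, mem_compl, mem_Iio]; tauto
  have h2 : (minimaSet P).filter (· < x) = (Iio x).filter (· ∈ minimaSet P) := by
    ext z; simp only [mem_filter, mem_Iio]; tauto
  rw [gP, h1, h2]
  rw [add_comm, card_filter_add_card_filter_not, Fin.card_Iio]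

include hcons in
lemma gP_strictMonoOn {x y : Fin (n + k)} (hx : x ∈ minimaSet P) (hy : y ∈ minimaSet P)
    (hxy : x < y) : gP P x < gP P y := by
  have hb : (x : ℕ) + 1 < n + k := by
    have : (y : ℕ) < n + k := y.2
    have : (x : ℕ) < y := hxy
    omega
  set x1 : Fin (n + k) := ⟨(x : ℕ) + 1, hb⟩ with hx1
  have hx1n : x1 ∉ minimaSet P := by
    intro hmem
    rcases mem_minimaSet.1 hmem with ⟨B1, hB1, hxB1, hmin1⟩
    rcases mem_minimaSet.1 hx with ⟨B0, hB0, hxB0, hmin0⟩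
    have hne : B0 ≠ B1 := by
      intro h
      subst h
      have hle : x ≤ x1 := hmin0 _ hxB1
      have hle2 : x1 ≤ x := hmin1 _ hxB0
      have hc : (x : ℕ) = (x1 : ℕ) := le_antisymm hle hle2
      simp [hx1] at hc
    exact hcons B0 hB0 B1 hB1 hne x hxB0 x1 hxB1 hmin0 hmin1 rfl
  have hx1y : x1 < y := by
    rcases mem_minimaSet.1 hx with ⟨B0, hB0, hxB0, hmin0⟩
    rcases mem_minimaSet.1 hy with ⟨B1, hB1, hyB1, hmin1⟩
    have hne : B0 ≠ B1 := by
      intro h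
      subst h
      have hle : x ≤ y := hmin0 _ hyB1
      have hle2 : y ≤ x := hmin1 _ hxB0
      exact absurd (le_antisymm hle hle2) hxy.ne
    have hne1 : (x : ℕ) + 1 ≠ (y : ℕ) := hcons B0 hB0 B1 hB1 hne x hxB0 y hyB1 hmin0 hmin1
    have : (x : ℕ) < y := hxy
    show ((x : ℕ) + 1 : ℕ) < (y : ℕ)
    omega
  calc gP P x ≤ gP P x1 := gP_mono P (by show (x:ℕ) ≤ (x:ℕ)+1; omega)
    _ < gP P y := gP_lt_of_compl P hx1n hx1y

/-- the order embedding of `Fin n` onto the non-minima -/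
noncomputable def iotaP : Fin n ↪o Fin (n + k) :=
  ((minimaSet P)ᶜ).orderEmbOfFin (card_compl_minimaSet P hkP)

lemma iotaP_not_mem (t : Fin n) : iotaP P hkP t ∉ minimaSet P :=
  mem_compl.1 (orderEmbOfFin_mem _ _ t)

lemma exists_iotaP {x : Fin (n + k)} (hx : x ∉ minimaSet P) :
    ∃ t, iotaP P hkP t = x := by
  have hx' : x ∈ ((minimaSet P)ᶜ : Finset (Fin (n + k))) := mem_compl.2 hx
  have := Finset.range_orderEmbOfFin ((minimaSet P)ᶜ) (card_compl_minimaSet P hkP)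
  have hx2 : x ∈ Set.range (iotaP P hkP) := by
    rw [iotaP, this]; exact_mod_cast hx'
  exact hx2

lemma gP_iotaP (t : Fin n) : gP P (iotaP P hkP t) = (t : ℕ) := by
  have himg : ((minimaSet P)ᶜ).filter (· < iotaP P hkP t)
      = (Iio t).image (iotaP P hkP) := by
    ext x
    simp only [mem_filter, mem_compl, mem_image, mem_Iio]
    constructor
    · rintro ⟨hx, hlt⟩
      rcases exists_iotaP P hkP hx with ⟨t', rfl⟩
      exact ⟨t', (iotaP P hkP).lt_iff_lt.1 hlt, rfl⟩
    · rintro ⟨t', h, rfl⟩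
      exact ⟨iotaP_not_mem P hkP t', (iotaP P hkP).strictMono h⟩
  rw [gP, himg, card_image_of_injective _ (iotaP P hkP).injective, Fin.card_Iio]

/-- the minimum of the part containing `x` -/
def minOf (x : Fin (n + k)) : Fin (n + k) :=
  (P.part x).min' (P.nonempty_of_mem_parts (P.part_mem.2 (mem_univ x)))

lemma minOf_mem_minimaSet (x : Fin (n + k)) : minOf P x ∈ minimaSet P :=
  min'_mem_minimaSet (P.part_mem.2 (mem_univ x))

lemma minOf_le (x : Fin (n + k)) : minOf P x ≤ x :=
  min'_le _ _ (P.mem_part (mem_univ x))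

lemma minOf_lt_iotaP (t : Fin n) : minOf P (iotaP P hkP t) < iotaP P hkP t :=
  lt_of_le_of_ne (minOf_le P _)
    (fun h => iotaP_not_mem P hkP t (h ▸ minOf_mem_minimaSet P _))

include hkP in
lemma gP_minOf_le (t : Fin n) : gP P (minOf P (iotaP P hkP t)) ≤ (t : ℕ) := by
  have := gP_mono P (minOf_lt_iotaP P hkP t).le
  rw [gP_iotaP P hkP t] at this
  exact this

/-- the subexceedent function associated to `P` -/
noncomputable def phiP : Fin n → Fin n := fun t =>
  ⟨gP P (minOf P (iotaP P hkP t)), lt_of_le_of_lt (gP_minOf_le P hkP t) t.2⟩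

lemma phiP_le (t : Fin n) : phiP P hkP t ≤ t := gP_minOf_le P hkP t

include hkP h2 in
lemma gP_min'_lt_n {B : Finset (Fin (n + k))} (hB : B ∈ P.parts) :
    gP P (B.min' (P.nonempty_of_mem_parts hB)) < n := by
  obtain ⟨x, hxB, hxne⟩ := Finset.exists_mem_ne
    (lt_of_lt_of_le one_lt_two (h2 B hB)) (B.min' (P.nonempty_of_mem_parts hB))
  have hxn : x ∉ minimaSet P := not_mem_minimaSet hB hxB hxne
  have hlt : B.min' _ < x := lt_of_le_of_ne (B.min'_le x hxB) (Ne.symm hxne)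
  exact lt_of_le_of_lt (gP_mono P hlt.le) (gP_lt_n P hkP hxn)

/-- the value associated to a block -/
noncomputable def vOf (B : Finset (Fin (n + k))) (hB : B ∈ P.parts) : Fin n :=
  ⟨gP P (B.min' (P.nonempty_of_mem_parts hB)), gP_min'_lt_n P hkP h2 hB⟩

lemma phiP_eq (t : Fin n) :
    phiP P hkP t = vOf P hkP h2 (P.part (iotaP P hkP t)) (P.part_mem.2 (mem_univ _)) :=
  rfl

lemma min'_ne_of_parts_ne {B B' : Finset (Fin (n + k))} (hB : B ∈ P.parts)
    (hB' : B' ∈ P.parts) (hne : B ≠ B') :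
    B.min' (P.nonempty_of_mem_parts hB) ≠ B'.min' (P.nonempty_of_mem_parts hB') := by
  intro h
  exact hne (P.eq_of_mem_parts hB hB' (B.min'_mem _) (h ▸ B'.min'_mem _))

include hcons in
lemma vOf_inj {B B' : Finset (Fin (n + k))} (hB : B ∈ P.parts) (hB' : B' ∈ P.parts)
    (h : vOf P hkP h2 B hB = vOf P hkP h2 B' hB') : B = B' := by
  by_contra hne
  have hmne := min'_ne_of_parts_ne P hB hB' hne
  have hval : gP P (B.min' _) = gP P (B'.min' _) := congrArg Fin.val h
  rcases lt_or_gt_of_ne hmne with hlt | hlt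
  · exact absurd hval (gP_strictMonoOn P hcons (min'_mem_minimaSet hB)
      (min'_mem_minimaSet hB') hlt).ne
  · exact absurd hval.symm (gP_strictMonoOn P hcons (min'_mem_minimaSet hB')
      (min'_mem_minimaSet hB) hlt).ne

include hcons in
lemma phiP_fiber {t : Fin n} {B : Finset (Fin (n + k))} (hB : B ∈ P.parts) :
    phiP P hkP t = vOf P hkP h2 B hB ↔ P.part (iotaP P hkP t) = B := by
  constructor
  · intro h
    rw [phiP_eq P hkP h2] at h
    exact vOf_inj P hkP h2 hcons _ hB h
  · intro h
    rw [phiP_eq P hkP h2]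
    subst h
    rfl

include hcons in
lemma Sset_phiP :
    Sset (phiP P hkP) = P.parts.attach.image (fun B => vOf P hkP h2 B.1 B.2) := by
  ext v
  rw [mem_Sset_iff]
  simp only [mem_image, mem_attach, true_and, Subtype.exists]
  constructor
  · rintro ⟨t, rfl⟩
    exact ⟨P.part (iotaP P hkP t), P.part_mem.2 (mem_univ _), (phiP_eq P hkP h2 t).symm⟩
  · rintro ⟨B, hB, rfl⟩
    obtain ⟨x, hxB, hxne⟩ := Finset.exists_mem_ne
      (lt_of_lt_of_le one_lt_two (h2 B hB)) (B.min' (P.nonempty_of_mem_parts hB))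
    have hxn : x ∉ minimaSet P := not_mem_minimaSet hB hxB hxne
    rcases exists_iotaP P hkP hxn with ⟨t, rfl⟩
    refine ⟨t, ?_⟩
    rw [phiP_fiber P hkP h2 hcons hB]
    exact P.part_eq_of_mem hB hxB

include h2 hcons in
lemma card_Sset_phiP : (Sset (phiP P hkP)).card = k := by
  rw [Sset_phiP P hkP h2 hcons, card_image_of_injOn, card_attach, hkP]
  intro B _ B' _ h
  exact Subtype.ext (vOf_inj P hkP h2 hcons B.2 B'.2 h)

lemma filter_min_image (q : Fin (n + k) → Prop) [DecidablePred q] :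
    (P.parts.attach.filter
        (fun B => q (B.1.min' (P.nonempty_of_mem_parts B.2)))).image
      (fun B => B.1.min' (P.nonempty_of_mem_parts B.2))
      = (minimaSet P).filter q := by
  ext x
  simp only [mem_image, mem_filter, mem_attach, true_and, Subtype.exists]
  constructor
  · rintro ⟨B, hB, hq, rfl⟩
    exact ⟨min'_mem_minimaSet hB, hq⟩
  · rintro ⟨hx, hq⟩
    rcases mem_minimaSet.1 hx with ⟨B, hB, hxB, -⟩
    have := eq_min'_of_minimaSet hx hB hxB
    exact ⟨B, hB, this ▸ hq, this.symm⟩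

lemma card_attach_filter_min (q : Fin (n + k) → Prop) [DecidablePred q] :
    (P.parts.attach.filter
        (fun B => q (B.1.min' (P.nonempty_of_mem_parts B.2)))).card
      = ((minimaSet P).filter q).card := by
  rw [← filter_min_image P q]
  apply (card_image_of_injOn _).symm
  intro B hB B' hB' h
  simp only at h
  refine Subtype.ext (P.eq_of_mem_parts B.2 B'.2
    (B.1.min'_mem (P.nonempty_of_mem_parts B.2)) ?_)
  rw [h]
  exact B'.1.min'_mem (P.nonempty_of_mem_parts B'.2)

include hcons in
lemma vOf_le_iff {B : Finset (Fin (n + k))} (hB : B ∈ P.parts) (t : Fin n) :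
    vOf P hkP h2 B hB ≤ t ↔ B.min' (P.nonempty_of_mem_parts hB) < iotaP P hkP t := by
  constructor
  · intro h
    rcases lt_or_ge (B.min' _) (iotaP P hkP t) with hlt | hle
    · exact hlt
    · exfalso
      have hne : iotaP P hkP t ≠ B.min' (P.nonempty_of_mem_parts hB) :=
        fun he => iotaP_not_mem P hkP t (he ▸ min'_mem_minimaSet hB)
      have hlt2 : iotaP P hkP t < B.min' _ := lt_of_le_of_ne hle hne
      have := gP_lt_of_compl P (iotaP_not_mem P hkP t) hlt2
      rw [gP_iotaP P hkP t] at this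
      have hv : gP P (B.min' _) ≤ (t : ℕ) := h
      omega
  · intro h
    have := gP_mono P h.le
    rw [gP_iotaP P hkP t] at this
    exact this

include hcons in
lemma vOf_lt_iff {B B' : Finset (Fin (n + k))} (hB : B ∈ P.parts) (hB' : B' ∈ P.parts) :
    vOf P hkP h2 B hB < vOf P hkP h2 B' hB' ↔
      B.min' (P.nonempty_of_mem_parts hB) < B'.min' (P.nonempty_of_mem_parts hB') := by
  constructor
  · intro h
    rcases lt_trichotomy (B.min' (P.nonempty_of_mem_parts hB))
      (B'.min' (P.nonempty_of_mem_parts hB')) with hlt | heq | hgt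
    · exact hlt
    · exfalso
      have : B = B' := P.eq_of_mem_parts hB hB' (B.min'_mem _) (heq ▸ B'.min'_mem _)
      subst this
      exact absurd rfl h.ne
    · exfalso
      have := gP_strictMonoOn P hcons (min'_mem_minimaSet hB') (min'_mem_minimaSet hB) hgt
      have hv : gP P (B.min' _) < gP P (B'.min' _) := h
      omega
  · intro h
    exact gP_strictMonoOn P hcons (min'_mem_minimaSet hB) (min'_mem_minimaSet hB') h

include h2 hcons in
lemma cle_phiP (t : Fin n) :
    cle (phiP P hkP) t = ((minimaSet P).filter (· < iotaP P hkP t)).card := by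
  have hset : (Sset (phiP P hkP)).filter (· ≤ t)
      = (P.parts.attach.filter
          (fun B => B.1.min' (P.nonempty_of_mem_parts B.2) < iotaP P hkP t)).image
        (fun B => vOf P hkP h2 B.1 B.2) := by
    ext v
    simp only [mem_filter, mem_image, mem_attach, true_and, Subtype.exists]
    constructor
    · rintro ⟨hv, hle⟩
      rw [Sset_phiP P hkP h2 hcons] at hv
      simp only [mem_image, mem_attach, true_and, Subtype.exists] at hv
      rcases hv with ⟨B, hB, rfl⟩
      exact ⟨B, hB, (vOf_le_iff P hkP h2 hcons hB t).1 hle, rfl⟩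
    · rintro ⟨B, hB, hlt, rfl⟩
      constructor
      · rw [Sset_phiP P hkP h2 hcons]
        exact mem_image_of_mem _ (mem_attach _ ⟨B, hB⟩)
      · exact (vOf_le_iff P hkP h2 hcons hB t).2 hlt
  rw [cle, hset, card_image_of_injOn, card_attach_filter_min P (· < iotaP P hkP t)]
  intro B hBm B' hBm' h
  exact Subtype.ext (vOf_inj P hkP h2 hcons B.2 B'.2 h)

include h2 hcons in
lemma eFn_phiP (t : Fin n) :
    eFn (phiP P hkP) (card_Sset_phiP P hkP h2 hcons) t = iotaP P hkP t := by
  apply Fin.ext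
  show (t : ℕ) + cle (phiP P hkP) t = (iotaP P hkP t : ℕ)
  have h1 := gP_add P (iotaP P hkP t)
  rw [gP_iotaP P hkP t] at h1
  rw [cle_phiP P hkP h2 hcons t]
  omega

include h2 hcons in
lemma clt_phiP {B : Finset (Fin (n + k))} (hB : B ∈ P.parts) :
    clt (phiP P hkP) (vOf P hkP h2 B hB)
      = ((minimaSet P).filter (· < B.min' (P.nonempty_of_mem_parts hB))).card := by
  have hset : (Sset (phiP P hkP)).filter (· < vOf P hkP h2 B hB)
      = (P.parts.attach.filter
          (fun B' => B'.1.min' (P.nonempty_of_mem_parts B'.2)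
            < B.min' (P.nonempty_of_mem_parts hB))).image
        (fun B' => vOf P hkP h2 B'.1 B'.2) := by
    ext v
    simp only [mem_filter, mem_image, mem_attach, true_and, Subtype.exists]
    constructor
    · rintro ⟨hv, hlt⟩
      rw [Sset_phiP P hkP h2 hcons] at hv
      simp only [mem_image, mem_attach, true_and, Subtype.exists] at hv
      rcases hv with ⟨B', hB', rfl⟩
      exact ⟨B', hB', (vOf_lt_iff P hkP h2 hcons hB' hB).1 hlt, rfl⟩
    · rintro ⟨B', hB', hlt, rfl⟩
      constructor
      · rw [Sset_phiP P hkP h2 hcons]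
        exact mem_image_of_mem _ (mem_attach _ ⟨B', hB'⟩)
      · exact (vOf_lt_iff P hkP h2 hcons hB' hB).2 hlt
  rw [clt, hset, card_image_of_injOn,
    card_attach_filter_min P (· < B.min' (P.nonempty_of_mem_parts hB))]
  intro B' hBm B'' hBm' h
  exact Subtype.ext (vOf_inj P hkP h2 hcons B'.2 B''.2 h)

include h2 hcons in
lemma mFn_phiP {B : Finset (Fin (n + k))} (hB : B ∈ P.parts) :
    mFn (phiP P hkP) (card_Sset_phiP P hkP h2 hcons) (vOf P hkP h2 B hB)
      = B.min' (P.nonempty_of_mem_parts hB) := by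
  apply Fin.ext
  show (vOf P hkP h2 B hB : ℕ) + clt (phiP P hkP) (vOf P hkP h2 B hB)
      = (B.min' (P.nonempty_of_mem_parts hB) : ℕ)
  have h1 := gP_add P (B.min' (P.nonempty_of_mem_parts hB))
  rw [clt_phiP P hkP h2 hcons hB]
  have : (vOf P hkP h2 B hB : ℕ) = gP P (B.min' (P.nonempty_of_mem_parts hB)) := rfl
  omega

include h2 hcons in
lemma image_fiber_phiP {B : Finset (Fin (n + k))} (hB : B ∈ P.parts) :
    (univ.filter (fun t => phiP P hkP t = vOf P hkP h2 B hB)).image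
        (eFn (phiP P hkP) (card_Sset_phiP P hkP h2 hcons))
      = B.erase (B.min' (P.nonempty_of_mem_parts hB)) := by
  rw [Finset.image_congr (g := iotaP P hkP)
    (fun t _ => eFn_phiP P hkP h2 hcons t)]
  ext x
  simp only [mem_image, mem_filter, mem_univ, true_and, mem_erase]
  constructor
  · rintro ⟨t, ht, rfl⟩
    have hpart := (phiP_fiber P hkP h2 hcons hB).1 ht
    refine ⟨?_, hpart ▸ P.mem_part (mem_univ _)⟩
    intro he
    exact iotaP_not_mem P hkP t (he ▸ min'_mem_minimaSet hB)
  · rintro ⟨hxne, hxB⟩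
    have hxn : x ∉ minimaSet P := not_mem_minimaSet hB hxB hxne
    rcases exists_iotaP P hkP hxn with ⟨t, rfl⟩
    refine ⟨t, ?_, rfl⟩
    rw [phiP_fiber P hkP h2 hcons hB]
    exact P.part_eq_of_mem hB hxB

include h2 hcons in
lemma blockOf_phiP {B : Finset (Fin (n + k))} (hB : B ∈ P.parts) :
    blockOf (card_Sset_phiP P hkP h2 hcons) (vOf P hkP h2 B hB) = B := by
  rw [blockOf, mFn_phiP P hkP h2 hcons hB, image_fiber_phiP P hkP h2 hcons hB,
    insert_erase (B.min'_mem _)]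

include h2 hcons in
lemma parts_phiP :
    (toPartition (card_Sset_phiP P hkP h2 hcons) (phiP_le P hkP)).parts = P.parts := by
  rw [parts_toPartition, Sset_phiP P hkP h2 hcons, image_image]
  rw [Finset.image_congr (g := fun B => B.1)
    (fun B _ => blockOf_phiP P hkP h2 hcons B.2)]
  exact attach_image_val

include h2 hcons in
lemma fib_phiP {B : Finset (Fin (n + k))} (hB : B ∈ P.parts) :
    fib (phiP P hkP) (vOf P hkP h2 B hB) = B.card - 1 := by
  rw [fib, ← card_image_of_injective _ (eFn_injective (card_Sset_phiP P hkP h2 hcons)),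
    image_fiber_phiP P hkP h2 hcons hB, card_erase_of_mem (B.min'_mem _)]

include h2 hcons in
lemma fiberMultiset_phiP :
    fiberMultiset (phiP P hkP) = P.parts.val.map (fun B => B.card - 1) := by
  rw [fiberMultiset_eq, Sset_phiP P hkP h2 hcons,
    image_val_of_injOn (fun B _ B' _ h => Subtype.ext (vOf_inj P hkP h2 hcons B.2 B'.2 h)),
    Multiset.map_map]
  rw [Multiset.map_congr rfl (fun B hBm => by
    show fib (phiP P hkP) (vOf P hkP h2 B.1 B.2) = B.1.card - 1
    exact fib_phiP P hkP h2 hcons B.2)]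
  have := Multiset.attach_map_val' P.parts.val (fun B => B.card - 1)
  rw [Finset.attach_val]
  exact this

end Surj2

end Np14

/-- for a partition `p` of `n` with `k` parts, `N_p` (the number of
subexceedent functions `φ ∈ Leib(n)` with `Θ(φ) = p`) equals the number of set
partitions of `{1,…,n+k}` into `k` blocks of sizes `p₁+1,…,p_k+1` in which the
minima of two distinct blocks are never consecutive integers. -/
theorem Np_eq_card_set_partitions (n k : ℕ) (p : n.Partition)
    (hk : p.parts.card = k) :
    Nat.card {φ : Fin n → Fin n // (∀ j, φ j ≤ j) ∧ fiberMultiset φ = p.parts} =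
    Nat.card {P : Finpartition (Finset.univ : Finset (Fin (n + k))) //
      P.parts.val.map Finset.card = p.parts.map (· + 1) ∧
      ∀ B ∈ P.parts, ∀ B' ∈ P.parts, B ≠ B' →
        ∀ b ∈ B, ∀ b' ∈ B',
          (∀ x ∈ B, b ≤ x) → (∀ x ∈ B', b' ≤ x) → (b : ℕ) + 1 ≠ (b' : ℕ)} := by
  classical
  have hkS : ∀ φ : Fin n → Fin n, fiberMultiset φ = p.parts → (Np14.Sset φ).card = k := by
    intro φ h
    rw [Np14.card_Sset_of_fiberMultiset h, hk]
  let F : {φ : Fin n → Fin n // (∀ j, φ j ≤ j) ∧ fiberMultiset φ = p.parts} →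
      {P : Finpartition (Finset.univ : Finset (Fin (n + k))) //
        P.parts.val.map Finset.card = p.parts.map (· + 1) ∧
        ∀ B ∈ P.parts, ∀ B' ∈ P.parts, B ≠ B' →
          ∀ b ∈ B, ∀ b' ∈ B',
            (∀ x ∈ B, b ≤ x) → (∀ x ∈ B', b' ≤ x) → (b : ℕ) + 1 ≠ (b' : ℕ)} :=
    fun x => ⟨Np14.toPartition (hkS x.1 x.2.2) x.2.1,
      by rw [Np14.sizes_toPartition, x.2.2],
      Np14.minima_nonconsec_toPartition _ _⟩
  apply Nat.card_eq_of_bijective F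
  constructor
  · rintro ⟨φ, hφ, hf⟩ ⟨φ', hφ', hf'⟩ h
    have hval : Np14.toPartition (hkS φ hf) hφ = Np14.toPartition (hkS φ' hf') hφ' :=
      Subtype.ext_iff.1 h
    exact Subtype.ext (Np14.toPartition_injective (hkS φ hf) hφ (hkS φ' hf') hφ' hval)
  · rintro ⟨P, hsz, hcons⟩
    have hkP : P.parts.card = k := by
      have hc := congrArg Multiset.card hsz
      simp only [Multiset.card_map] at hc
      show Multiset.card P.parts.val = k
      rw [hc, hk]
    have h2 : ∀ B ∈ P.parts, 2 ≤ B.card := by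
      intro B hB
      have hmem : B.card ∈ P.parts.val.map Finset.card := Multiset.mem_map_of_mem _ hB
      rw [hsz] at hmem
      rcases Multiset.mem_map.1 hmem with ⟨q, hq, hqe⟩
      have := p.parts_pos hq
      omega
    have hfib : fiberMultiset (Np14.phiP P hkP) = p.parts := by
      rw [Np14.fiberMultiset_phiP P hkP h2 hcons]
      have hmm : P.parts.val.map (fun B => B.card - 1)
          = (P.parts.val.map Finset.card).map (fun c => c - 1) := by
        rw [Multiset.map_map]; rfl
      rw [hmm, hsz, Multiset.map_map]
      simp
    refine ⟨⟨Np14.phiP P hkP, Np14.phiP_le P hkP, hfib⟩, ?_⟩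
    exact Subtype.ext (Np14.finpartition_ext (Np14.parts_phiP P hkP h2 hcons))
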